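/- There is no finite axiomatization E over closed BCCS terms that is both sound and ground-complete for BCCS(A) modulo weak impossible futures equivalence. -/

import Mathlib

/-- BCCS terms over concrete actions `A` (with `none` playing the role of the
hidden action τ) and variables `V`. -/
inductive Tm (A V : Type) : Type
  | nil : Tm A V
  | var : V → Tm A V
  | plus : Tm A V → Tm A V → Tm A V
  | pre : Option A → Tm A V → Tm A V

namespace Tm

variable {A V : Type}

/-- The operational semantics of BCCS. -/
inductive Step : Tm A V → Option A → Tm A V → Prop
  | pre (α : Option A) (t : Tm A V) : Step (.pre α t) α t
  | plusL {t : Tm A V} {α : Option A} {t' : Tm A V} (u : Tm A V) :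
      Step t α t' → Step (.plus t u) α t'
  | plusR (t : Tm A V) {u : Tm A V} {α : Option A} {u' : Tm A V} :
      Step u α u' → Step (.plus t u) α u'

/-- `⇒` : the reflexive-transitive closure of τ-steps. -/
def WTau : Tm A V → Tm A V → Prop := Relation.ReflTransGen (fun t u => Step t none u)

/-- Strong (concrete) traces leading to a state. -/
inductive TraceTo : Tm A V → List A → Tm A V → Prop
  | refl (t : Tm A V) : TraceTo t [] t
  | act {t : Tm A V} {a : A} {t' : Tm A V} {w : List A} {u : Tm A V} :
      Step t (some a) t' → TraceTo t' w u → TraceTo t (a :: w) u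

/-- Weak traces leading to a state (τ-steps are skipped). -/
inductive WTraceTo : Tm A V → List A → Tm A V → Prop
  | refl (t : Tm A V) : WTraceTo t [] t
  | tau {t t' : Tm A V} {w : List A} {u : Tm A V} :
      Step t none t' → WTraceTo t' w u → WTraceTo t w u
  | act {t : Tm A V} {a : A} {t' : Tm A V} {w : List A} {u : Tm A V} :
      Step t (some a) t' → WTraceTo t' w u → WTraceTo t (a :: w) u

/-- The set of (strong) traces of a term. -/
def T (t : Tm A V) : Set (List A) := {w | ∃ t', TraceTo t w t'}

/-- The set of weak traces of a term. -/
def WT (t : Tm A V) : Set (List A) := {w | ∃ t', WTraceTo t w t'}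

/-- `(w, B)` is an impossible future of `t`. -/
def ImpFut (t : Tm A V) (w : List A) (B : Set (List A)) : Prop :=
  ∃ t', TraceTo t w t' ∧ ∀ s ∈ T t', s ∉ B

/-- `(w, B)` is a weak impossible future of `t`. -/
def WImpFut (t : Tm A V) (w : List A) (B : Set (List A)) : Prop :=
  ∃ t', WTraceTo t w t' ∧ ∀ s ∈ WT t', s ∉ B

/-- The (concrete) impossible futures preorder. -/
def IFle (p q : Tm A V) : Prop := ∀ w B, ImpFut p w B → ImpFut q w B

/-- (Concrete) impossible futures equivalence. -/
def IFeq (p q : Tm A V) : Prop := IFle p q ∧ IFle q p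

/-- The weak impossible futures preorder. -/
def WIFle (p q : Tm A V) : Prop :=
  (∀ w B, WImpFut p w B → WImpFut q w B) ∧ (WT p = WT q) ∧
  ((∃ p', Step p none p') → ∃ q', Step q none q')

/-- Weak impossible futures equivalence. -/
def WIFeq (p q : Tm A V) : Prop := WIFle p q ∧ WIFle q p

/-- The variables occurring in a term. -/
def vars : Tm A V → Set V
  | nil => ∅
  | var x => {x}
  | plus t u => vars t ∪ vars u
  | pre _ t => vars t

/-- A term is closed if it contains no variables. -/
def Closed (t : Tm A V) : Prop := vars t = ∅

/-- Substitution. -/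
def subst (σ : V → Tm A V) : Tm A V → Tm A V
  | nil => nil
  | var x => σ x
  | plus t u => plus (subst σ t) (subst σ u)
  | pre α t => pre α (subst σ t)

/-- A closed substitution. -/
def ClosedSub (σ : V → Tm A V) : Prop := ∀ x, Closed (σ x)

/-- A BCCSP term: one containing no occurrence of the τ prefix. -/
def NoTau : Tm A V → Prop
  | nil => True
  | var _ => True
  | plus t u => NoTau t ∧ NoTau u
  | pre none _ => False
  | pre (some _) t => NoTau t

/-- The variables occurring initially (outside all prefixes). -/
def initVars : Tm A V → Set V
  | nil => ∅
  | var x => {x}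
  | plus t u => initVars t ∪ initVars u
  | pre _ _ => ∅

/-- The variables having a non-initial occurrence (under some prefix). -/
def deepVars : Tm A V → Set V
  | nil => ∅
  | var _ => ∅
  | plus t u => deepVars t ∪ deepVars u
  | pre _ t => vars t

/-- A term is safe if no variable occurs both initially and non-initially. -/
def Safe (t : Tm A V) : Prop := initVars t ∩ deepVars t = ∅

/-- `init-τ` : rename all initial prefixes into τ. -/
def initTau : Tm A V → Tm A V
  | nil => nil
  | var x => var x
  | plus t u => plus (initTau t) (initTau u)
  | pre _ t => pre none t

/-- The weak depth of a term (τ-prefixes are not counted). -/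
def wdepth : Tm A V → ℕ
  | nil => 0
  | var _ => 0
  | plus t u => max (wdepth t) (wdepth u)
  | pre none t => wdepth t
  | pre (some _) t => wdepth t + 1

/-- `n`-fold prefixing with the action `a`. -/
def npre (a : A) : ℕ → Tm A V → Tm A V
  | 0, t => t
  | n + 1, t => pre (some a) (npre a n t)

/-- Finite sums of terms. -/
def listSum : List (Tm A V) → Tm A V
  | [] => nil
  | t :: l => plus t (listSum l)

/-- Weak traces ending in a variable: `(w, x) ∈ WTV t` iff `t` can weakly perform
`w` and reach a term in which `x` occurs initially. -/
def WTV (t : Tm A V) : Set (List A × V) :=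
  {wx | ∃ t', WTraceTo t wx.1 t' ∧ wx.2 ∈ initVars t'}

/-- The axioms A1-4 + WIF1 + WIF2 (as schemas, i.e. closed under instantiation). -/
inductive AX : Tm A V → Tm A V → Prop
  | A1 (t u : Tm A V) : AX (.plus t u) (.plus u t)
  | A2 (t u v : Tm A V) : AX (.plus (.plus t u) v) (.plus t (.plus u v))
  | A3 (t : Tm A V) : AX (.plus t t) t
  | A4 (t : Tm A V) : AX (.plus t .nil) t
  | WIF1 (α : Option A) (t u : Tm A V) :
      AX (.pre α (.plus (.pre none t) (.pre none u))) (.plus (.pre α t) (.pre α u))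
  | WIF2 (t u : Tm A V) :
      AX (.plus (.pre none t) u) (.plus (.pre none t) (.pre none (.plus t u)))

/-- Equational derivability from an axiomatization `E`. -/
inductive Deriv (E : Tm A V → Tm A V → Prop) : Tm A V → Tm A V → Prop
  | ax {t u : Tm A V} : E t u → Deriv E t u
  | inst {t u : Tm A V} (σ : V → Tm A V) : E t u → Deriv E (subst σ t) (subst σ u)
  | refl (t : Tm A V) : Deriv E t t
  | symm {t u : Tm A V} : Deriv E t u → Deriv E u t
  | trans {t u v : Tm A V} : Deriv E t u → Deriv E u v → Deriv E t v
  | pre (α : Option A) {t u : Tm A V} : Deriv E t u → Deriv E (.pre α t) (.pre α u)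
  | plus {t u t' u' : Tm A V} :
      Deriv E t t' → Deriv E u u' → Deriv E (.plus t u) (.plus t' u')

/-- Inequational derivability from an axiomatization `E` (no symmetry). -/
inductive IDeriv (E : Tm A V → Tm A V → Prop) : Tm A V → Tm A V → Prop
  | ax {t u : Tm A V} : E t u → IDeriv E t u
  | inst {t u : Tm A V} (σ : V → Tm A V) : E t u → IDeriv E (subst σ t) (subst σ u)
  | refl (t : Tm A V) : IDeriv E t t
  | trans {t u v : Tm A V} : IDeriv E t u → IDeriv E u v → IDeriv E t v
  | pre (α : Option A) {t u : Tm A V} : IDeriv E t u → IDeriv E (.pre α t) (.pre α u)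
  | plus {t u t' u' : Tm A V} :
      IDeriv E t t' → IDeriv E u u' → IDeriv E (.plus t u) (.plus t' u')

end Tm
namespace Tm

section Dev

variable {A V : Type}

/-! ### Basic facts about substitution and closedness -/

theorem subst_var (t : Tm A V) : subst (fun x => var x) t = t := by
  induction t with
  | nil => rfl
  | var x => rfl
  | plus t u iht ihu => simp [subst, iht, ihu]
  | pre α t ih => simp [subst, ih]

theorem subst_subst (σ ρ : V → Tm A V) (t : Tm A V) :
    subst σ (subst ρ t) = subst (fun x => subst σ (ρ x)) t := by
  induction t with
  | nil => rfl
  | var x => rfl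
  | plus t u iht ihu => simp [subst, iht, ihu]
  | pre α t ih => simp [subst, ih]

theorem subst_congr {σ ρ : V → Tm A V} {t : Tm A V}
    (h : ∀ x ∈ vars t, σ x = ρ x) : subst σ t = subst ρ t := by
  induction t with
  | nil => rfl
  | var x => exact h x (by simp [vars])
  | plus t u iht ihu =>
      simp only [subst]
      rw [iht (fun x hx => h x (by simp [vars]; exact Or.inl hx)),
          ihu (fun x hx => h x (by simp [vars]; exact Or.inr hx))]
  | pre α t ih => simp only [subst]; rw [ih (fun x hx => h x (by simpa [vars] using hx))]

theorem closed_iff {t : Tm A V} : Closed t ↔ ∀ x, x ∉ vars t := by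
  unfold Closed; exact Set.eq_empty_iff_forall_notMem

theorem subst_closed_eq {σ : V → Tm A V} {t : Tm A V} (h : Closed t) : subst σ t = t := by
  induction t with
  | nil => rfl
  | var x =>
      exfalso
      have := closed_iff.1 h x
      simp [vars] at this
  | plus t u iht ihu =>
      rw [closed_iff] at h
      simp only [subst]
      rw [iht (closed_iff.2 fun x hx => h x (by simp [vars]; exact Or.inl hx)),
          ihu (closed_iff.2 fun x hx => h x (by simp [vars]; exact Or.inr hx))]
  | pre α t ih =>
      rw [closed_iff] at h
      simp only [subst]
      rw [ih (closed_iff.2 fun x hx => h x (by simpa [vars] using hx))]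

theorem closed_plus_iff {t u : Tm A V} : Closed (plus t u) ↔ Closed t ∧ Closed u := by
  simp only [closed_iff, vars, Set.mem_union]
  constructor
  · exact fun h => ⟨fun x hx => h x (Or.inl hx), fun x hx => h x (Or.inr hx)⟩
  · rintro ⟨h1, h2⟩ x (hx | hx); exacts [h1 x hx, h2 x hx]

theorem closed_pre_iff {α : Option A} {t : Tm A V} : Closed (pre α t) ↔ Closed t := by
  simp only [closed_iff, vars]

theorem closed_nil : Closed (nil : Tm A V) := rfl

theorem closed_subst_of {σ : V → Tm A V} {t : Tm A V}
    (h : ∀ x ∈ vars t, Closed (σ x)) : Closed (subst σ t) := by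
  induction t with
  | nil => exact closed_nil
  | var x => exact h x (by simp [vars])
  | plus t u iht ihu =>
      exact closed_plus_iff.2 ⟨iht fun x hx => h x (by simp [vars]; exact Or.inl hx),
        ihu fun x hx => h x (by simp [vars]; exact Or.inr hx)⟩
  | pre α t ih =>
      exact closed_pre_iff.2 (ih fun x hx => h x (by simpa [vars] using hx))

theorem closed_of_subst_closed {σ : V → Tm A V} {t : Tm A V}
    (h : Closed (subst σ t)) : ∀ x ∈ vars t, Closed (σ x) := by
  induction t with
  | nil => intro x hx; simp [vars] at hx
  | var x => intro y hy; simp [vars] at hy; subst hy; exact h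
  | plus t u iht ihu =>
      rw [subst, closed_plus_iff] at h
      intro x hx
      simp only [vars, Set.mem_union] at hx
      rcases hx with hx | hx
      exacts [iht h.1 x hx, ihu h.2 x hx]
  | pre α t ih =>
      rw [subst, closed_pre_iff] at h
      intro x hx
      simp only [vars] at hx
      exact ih h x hx

/-! ### Steps -/

theorem step_nil_elim {α : Option A} {s : Tm A V} (h : Step (nil : Tm A V) α s) : False := by
  cases h

theorem step_var_elim {x : V} {α : Option A} {s : Tm A V} (h : Step (var x : Tm A V) α s) :
    False := by cases h

theorem step_subst_lift {σ : V → Tm A V} {t t' : Tm A V} {α : Option A}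
    (h : Step t α t') : Step (subst σ t) α (subst σ t') := by
  induction h with
  | pre α t => exact Step.pre α (subst σ t)
  | plusL u _ ih => exact Step.plusL (subst σ u) ih
  | plusR t _ ih => exact Step.plusR (subst σ t) ih

theorem step_initVar {σ : V → Tm A V} {t : Tm A V} {x : V} {α : Option A} {s : Tm A V}
    (hx : x ∈ initVars t) (h : Step (σ x) α s) : Step (subst σ t) α s := by
  induction t with
  | nil => simp [initVars] at hx
  | var y => simp [initVars] at hx; subst hx; exact h
  | plus t u iht ihu =>
      simp only [initVars, Set.mem_union] at hx
      rcases hx with hx | hx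
      · exact Step.plusL _ (iht hx)
      · exact Step.plusR _ (ihu hx)
  | pre α t ih => simp [initVars] at hx

theorem step_subst_decompose {σ : V → Tm A V} {t : Tm A V} {α : Option A} {s : Tm A V}
    (h : Step (subst σ t) α s) :
    (∃ t', Step t α t' ∧ s = subst σ t') ∨ (∃ x, x ∈ initVars t ∧ Step (σ x) α s) := by
  induction t with
  | nil => exact absurd h step_nil_elim
  | var x => exact Or.inr ⟨x, by simp [initVars], h⟩
  | plus t u iht ihu =>
      cases h with
      | plusL _ h =>
          rcases iht h with ⟨t', ht', rfl⟩ | ⟨x, hx, hstep⟩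
          · exact Or.inl ⟨t', Step.plusL _ ht', rfl⟩
          · exact Or.inr ⟨x, by simp [initVars, Set.mem_union]; exact Or.inl hx, hstep⟩
      | plusR _ h =>
          rcases ihu h with ⟨u', hu', rfl⟩ | ⟨x, hx, hstep⟩
          · exact Or.inl ⟨u', Step.plusR _ hu', rfl⟩
          · exact Or.inr ⟨x, by simp [initVars, Set.mem_union]; exact Or.inr hx, hstep⟩
  | pre β t ih =>
      cases h with
      | pre => exact Or.inl ⟨t, Step.pre _ t, rfl⟩

theorem wdepth_step_le {t t' : Tm A V} (h : Step t none t') : wdepth t' ≤ wdepth t := by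
  generalize hα : (none : Option A) = α at h
  induction h with
  | pre β t => cases hα; simp [wdepth]
  | plusL u _ ih => exact le_trans (ih hα) (by simp [wdepth])
  | plusR t _ ih => exact le_trans (ih hα) (by simp [wdepth])

theorem wdepth_step_lt {t t' : Tm A V} {b : A} (h : Step t (some b) t') :
    wdepth t' < wdepth t := by
  generalize hα : (some b : Option A) = α at h
  induction h with
  | pre β t => cases hα; simp [wdepth]
  | plusL u _ ih => exact lt_of_lt_of_le (ih hα) (by simp [wdepth])
  | plusR t _ ih => exact lt_of_lt_of_le (ih hα) (by simp [wdepth])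

/-! ### Traces -/

theorem wtrace_comp {t s r : Tm A V} {w₁ w₂ : List A}
    (h₁ : WTraceTo t w₁ s) (h₂ : WTraceTo s w₂ r) : WTraceTo t (w₁ ++ w₂) r := by
  induction h₁ with
  | refl t => exact h₂
  | tau hstep _ ih => exact WTraceTo.tau hstep (ih h₂)
  | act hstep _ ih => exact WTraceTo.act hstep (ih h₂)

theorem wtrace_split {t r : Tm A V} {w₁ w₂ : List A}
    (h : WTraceTo t (w₁ ++ w₂) r) : ∃ s, WTraceTo t w₁ s ∧ WTraceTo s w₂ r := by
  generalize hw : w₁ ++ w₂ = w at h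
  induction h generalizing w₁ w₂ with
  | refl t =>
      rcases List.append_eq_nil_iff.1 hw with ⟨rfl, rfl⟩
      exact ⟨t, WTraceTo.refl t, WTraceTo.refl t⟩
  | tau hstep _ ih =>
      obtain ⟨s, hs1, hs2⟩ := ih hw
      exact ⟨s, WTraceTo.tau hstep hs1, hs2⟩
  | act hstep htr ih =>
      cases w₁ with
      | nil =>
          subst hw
          exact ⟨_, WTraceTo.refl _, WTraceTo.act hstep htr⟩
      | cons b w₁' =>
          simp only [List.cons_append, List.cons.injEq] at hw
          obtain ⟨rfl, hw⟩ := hw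
          obtain ⟨s, hs1, hs2⟩ := ih hw
          exact ⟨s, WTraceTo.act hstep hs1, hs2⟩

theorem wtrace_length_le_wdepth {t s : Tm A V} {w : List A}
    (h : WTraceTo t w s) : w.length ≤ wdepth t := by
  induction h with
  | refl t => simp
  | tau hstep _ ih => exact le_trans ih (wdepth_step_le hstep)
  | act hstep _ ih =>
      simp only [List.length_cons]
      exact Nat.succ_le_of_lt (lt_of_le_of_lt ih (wdepth_step_lt hstep))

theorem wtrace_subst_lift {σ : V → Tm A V} {t s : Tm A V} {w : List A}
    (h : WTraceTo t w s) : WTraceTo (subst σ t) w (subst σ s) := by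
  induction h with
  | refl t => exact WTraceTo.refl _
  | tau hstep _ ih => exact WTraceTo.tau (step_subst_lift hstep) ih
  | act hstep _ ih => exact WTraceTo.act (step_subst_lift hstep) ih

theorem wtrace_initVar {σ : V → Tm A V} {v : Tm A V} {x : V} {w : List A} {s : Tm A V}
    (hx : x ∈ initVars v) (h : WTraceTo (σ x) w s) :
    (w = [] ∧ s = σ x) ∨ WTraceTo (subst σ v) w s := by
  cases h with
  | refl => exact Or.inl ⟨rfl, rfl⟩
  | tau hstep htr => exact Or.inr (WTraceTo.tau (step_initVar hx hstep) htr)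
  | act hstep htr => exact Or.inr (WTraceTo.act (step_initVar hx hstep) htr)

/-- An "entering" trace: a weak trace consisting of at least one step. -/
def Ent (r : Tm A V) (w : List A) (s : Tm A V) : Prop :=
  (∃ s₀, Step r none s₀ ∧ WTraceTo s₀ w s) ∨
  (∃ b w' s₀, w = b :: w' ∧ Step r (some b) s₀ ∧ WTraceTo s₀ w' s)

theorem ent_wtrace {r s : Tm A V} {w : List A} (h : Ent r w s) : WTraceTo r w s := by
  rcases h with ⟨s₀, hstep, htr⟩ | ⟨b, w', s₀, rfl, hstep, htr⟩
  · exact WTraceTo.tau hstep htr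
  · exact WTraceTo.act hstep htr

theorem wtrace_cases {r s : Tm A V} {w : List A} (h : WTraceTo r w s) :
    (w = [] ∧ s = r) ∨ Ent r w s := by
  cases h with
  | refl => exact Or.inl ⟨rfl, rfl⟩
  | tau hstep htr => exact Or.inr (Or.inl ⟨_, hstep, htr⟩)
  | act hstep htr => exact Or.inr (Or.inr ⟨_, _, _, rfl, hstep, htr⟩)

theorem ent_plusL {t u s : Tm A V} {w : List A} (h : Ent t w s) : Ent (plus t u) w s := by
  rcases h with ⟨s₀, hstep, htr⟩ | ⟨b, w', s₀, rfl, hstep, htr⟩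
  · exact Or.inl ⟨s₀, Step.plusL _ hstep, htr⟩
  · exact Or.inr ⟨b, w', s₀, rfl, Step.plusL _ hstep, htr⟩

theorem ent_plusR {t u s : Tm A V} {w : List A} (h : Ent u w s) : Ent (plus t u) w s := by
  rcases h with ⟨s₀, hstep, htr⟩ | ⟨b, w', s₀, rfl, hstep, htr⟩
  · exact Or.inl ⟨s₀, Step.plusR _ hstep, htr⟩
  · exact Or.inr ⟨b, w', s₀, rfl, Step.plusR _ hstep, htr⟩

theorem ent_plus_elim {t u s : Tm A V} {w : List A} (h : Ent (plus t u) w s) :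
    Ent t w s ∨ Ent u w s := by
  rcases h with ⟨s₀, hstep, htr⟩ | ⟨b, w', s₀, rfl, hstep, htr⟩
  · cases hstep with
    | plusL _ h => exact Or.inl (Or.inl ⟨_, h, htr⟩)
    | plusR _ h => exact Or.inr (Or.inl ⟨_, h, htr⟩)
  · cases hstep with
    | plusL _ h => exact Or.inl (Or.inr ⟨_, _, _, rfl, h, htr⟩)
    | plusR _ h => exact Or.inr (Or.inr ⟨_, _, _, rfl, h, htr⟩)

/-- The key decomposition of weak traces of a substituted term. -/
theorem wtrace_subst_decompose {σ : V → Tm A V} {t : Tm A V} {w : List A} {s : Tm A V}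
    (h : WTraceTo (subst σ t) w s) :
    (∃ t', WTraceTo t w t' ∧ s = subst σ t') ∨
    (∃ w₁ w₂ t' x, w = w₁ ++ w₂ ∧ WTraceTo t w₁ t' ∧ x ∈ initVars t' ∧ Ent (σ x) w₂ s) := by
  generalize hR : subst σ t = R at h
  induction h generalizing t with
  | refl r => exact Or.inl ⟨t, WTraceTo.refl t, hR.symm⟩
  | @tau r r' w s hstep htr ih =>
      subst hR
      rcases step_subst_decompose hstep with ⟨t₁, ht₁, rfl⟩ | ⟨x, hx, hstepx⟩
      · rcases ih rfl with ⟨t', htr', rfl⟩ | ⟨w₁, w₂, t', x, rfl, htr', hx, hent⟩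
        · exact Or.inl ⟨t', WTraceTo.tau ht₁ htr', rfl⟩
        · exact Or.inr ⟨w₁, w₂, t', x, rfl, WTraceTo.tau ht₁ htr', hx, hent⟩
      · exact Or.inr ⟨[], w, t, x, rfl, WTraceTo.refl t, hx, Or.inl ⟨r', hstepx, htr⟩⟩
  | @act r b r' w s hstep htr ih =>
      subst hR
      rcases step_subst_decompose hstep with ⟨t₁, ht₁, rfl⟩ | ⟨x, hx, hstepx⟩
      · rcases ih rfl with ⟨t', htr', rfl⟩ | ⟨w₁, w₂, t', x, rfl, htr', hx, hent⟩
        · exact Or.inl ⟨t', WTraceTo.act ht₁ htr', rfl⟩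
        · exact Or.inr ⟨b :: w₁, w₂, t', x, rfl, WTraceTo.act ht₁ htr', hx, hent⟩
      · exact Or.inr ⟨[], b :: w, t, x, rfl, WTraceTo.refl t, hx,
          Or.inr ⟨b, w, r', rfl, hstepx, htr⟩⟩

/-! ### Weak trace sets -/

theorem mem_WT {t : Tm A V} {w : List A} : w ∈ WT t ↔ ∃ s, WTraceTo t w s := Iff.rfl

theorem nil_mem_WT (t : Tm A V) : [] ∈ WT t := ⟨t, WTraceTo.refl t⟩

theorem WT_nil_eq : WT (nil : Tm A V) = {[]} := by
  ext w
  simp only [Set.mem_singleton_iff, mem_WT]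
  constructor
  · rintro ⟨s, hs⟩
    cases hs with
    | refl => rfl
    | tau hstep _ => exact absurd hstep step_nil_elim
    | act hstep _ => exact absurd hstep step_nil_elim
  · rintro rfl; exact nil_mem_WT _

theorem WT_mono_of_trace {t s : Tm A V} {w : List A} (h : WTraceTo t w s) :
    ∀ w' ∈ WT s, w ++ w' ∈ WT t := by
  rintro w' ⟨r, hr⟩
  exact ⟨r, wtrace_comp h hr⟩

theorem WT_tau_sub {t s : Tm A V} (h : WTraceTo t [] s) : WT s ⊆ WT t := by
  intro w hw
  have := WT_mono_of_trace h w hw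
  simpa using this
/-! ### Replicated traces and chains -/

/-- `rp a n` : the trace `a^n`. -/
def rp (a : A) (n : ℕ) : List A := List.replicate n a

/-- The set of traces `{a^i : i ≤ n}`. -/
def chainSet (a : A) (n : ℕ) : Set (List A) := {w | ∃ i ≤ n, w = rp a i}

theorem rp_zero (a : A) : rp a 0 = [] := rfl
theorem rp_succ (a : A) (n : ℕ) : rp a (n + 1) = a :: rp a n := rfl
theorem rp_length (a : A) (n : ℕ) : (rp a n).length = n := List.length_replicate
theorem rp_add (a : A) (i j : ℕ) : rp a (i + j) = rp a i ++ rp a j :=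
  List.replicate_add i j a
theorem rp_eq_nil_iff {a : A} {n : ℕ} : rp a n = [] ↔ n = 0 := by
  cases n with
  | zero => simp [rp_zero]
  | succ k => rw [rp_succ]; simp
theorem rp_inj {a : A} {i j : ℕ} (h : rp a i = rp a j) : i = j := by
  have := congrArg List.length h
  simpa [rp_length] using this

theorem rp_mem_of_mem {a b : A} {n : ℕ} (h : b ∈ rp a n) : b = a :=
  List.eq_of_mem_replicate h

theorem eq_rp_of_forall {a : A} {w : List A} (h : ∀ b ∈ w, b = a) : w = rp a w.length := by
  induction w with
  | nil => rfl
  | cons b w ih =>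
      have hb : b = a := h b (by simp)
      subst hb
      rw [List.length_cons, rp_succ]
      exact congrArg _ (ih fun c hc => h c (by simp [hc]))

theorem rp_append_split {a : A} {n : ℕ} {w₁ w₂ : List A} (h : w₁ ++ w₂ = rp a n) :
    ∃ i j, i + j = n ∧ w₁ = rp a i ∧ w₂ = rp a j := by
  have hmem : ∀ b ∈ w₁ ++ w₂, b = a := by
    intro b hb; rw [h] at hb; exact rp_mem_of_mem hb
  have h1 : w₁ = rp a w₁.length := eq_rp_of_forall fun b hb => hmem b (by simp [hb])
  have h2 : w₂ = rp a w₂.length := eq_rp_of_forall fun b hb => hmem b (by simp [hb])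
  refine ⟨w₁.length, w₂.length, ?_, h1, h2⟩
  have := congrArg List.length h
  simpa [rp_length] using this

theorem nil_mem_chainSet (a : A) (n : ℕ) : [] ∈ chainSet a n := ⟨0, Nat.zero_le n, rfl⟩

theorem rp_mem_chainSet {a : A} {i n : ℕ} : rp a i ∈ chainSet a n ↔ i ≤ n := by
  constructor
  · rintro ⟨j, hj, hw⟩
    rwa [rp_inj hw]
  · exact fun h => ⟨i, h, rfl⟩

theorem chainSet_mono {a : A} {n n' : ℕ} (h : n ≤ n') : chainSet a n ⊆ chainSet a n' := by
  rintro w ⟨i, hi, rfl⟩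
  exact ⟨i, le_trans hi h, rfl⟩

/-! ### The chain terms `a^n 0` -/

theorem npre_succ (a : A) (n : ℕ) (t : Tm A V) :
    npre a (n + 1) t = pre (some a) (npre a n t) := rfl

theorem npre_step_elim {a : A} {n : ℕ} {α : Option A} {s : Tm A V}
    (h : Step (npre a n (nil : Tm A V)) α s) :
    ∃ k, n = k + 1 ∧ α = some a ∧ s = npre a k nil := by
  cases n with
  | zero => exact absurd h step_nil_elim
  | succ k =>
      rw [npre_succ] at h
      cases h with
      | pre => exact ⟨k, rfl, rfl, rfl⟩

theorem npre_trace_elim {a : A} {n : ℕ} {w : List A} {s : Tm A V}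
    (h : WTraceTo (npre a n (nil : Tm A V)) w s) :
    ∃ i, i ≤ n ∧ w = rp a i ∧ s = npre a (n - i) nil := by
  generalize hR : npre a n (nil : Tm A V) = R at h
  induction h generalizing n with
  | refl t => exact ⟨0, Nat.zero_le n, rfl, by simp [← hR]⟩
  | tau hstep htr ih =>
      subst hR
      obtain ⟨k, rfl, hα, rfl⟩ := npre_step_elim hstep
      exact absurd hα (by simp)
  | @act r b r' w s hstep htr ih =>
      subst hR
      obtain ⟨k, rfl, hα, rfl⟩ := npre_step_elim hstep
      obtain rfl : b = a := by injection hα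
      obtain ⟨i, hi, rfl, rfl⟩ := ih rfl
      exact ⟨i + 1, by omega, by rw [rp_succ], by congr 1; omega⟩

theorem npre_trace_to {a : A} {i n : ℕ} (h : i ≤ n) :
    WTraceTo (npre a n (nil : Tm A V)) (rp a i) (npre a (n - i) nil) := by
  induction i generalizing n with
  | zero => simpa [rp_zero] using WTraceTo.refl _
  | succ i ih =>
      obtain ⟨k, rfl⟩ : ∃ k, n = k + 1 := ⟨n - 1, by omega⟩
      rw [npre_succ, rp_succ]
      refine WTraceTo.act (Step.pre _ _) ?_
      have := ih (n := k) (by omega)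
      simpa [Nat.succ_sub_succ] using this

theorem WT_npre {a : A} {n : ℕ} : WT (npre a n (nil : Tm A V)) = chainSet a n := by
  ext w
  constructor
  · rintro ⟨s, hs⟩
    obtain ⟨i, hi, rfl, rfl⟩ := npre_trace_elim hs
    exact rp_mem_chainSet.2 hi
  · rintro ⟨i, hi, rfl⟩
    exact ⟨_, npre_trace_to hi⟩

theorem npre_tau_trace {a : A} {n : ℕ} {s : Tm A V}
    (h : WTraceTo (npre a n (nil : Tm A V)) [] s) : s = npre a n nil := by
  obtain ⟨i, hi, hw, rfl⟩ := npre_trace_elim h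
  obtain rfl : i = 0 := by simpa [rp_eq_nil_iff] using hw.symm
  simp
/-! ### The witness terms -/

/-- `a^m 0 + a^{2m} 0`. -/
def Mw (a : A) (m : ℕ) : Tm A V := plus (npre a m nil) (npre a (2*m) nil)

/-- `τ a^{2m} 0 + τ(a^m 0 + a^{2m} 0)`. -/
def pw (a : A) (m : ℕ) : Tm A V := plus (pre none (npre a (2*m) nil)) (pre none (Mw a m))

/-- `τ(a^m 0 + a^{2m} 0)`. -/
def qw (a : A) (m : ℕ) : Tm A V := pre none (Mw a m)

variable {a : A} {m : ℕ}

theorem Mw_no_tau {s : Tm A V} (h : Step (Mw a m) none s) : False := by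
  cases h with
  | plusL _ h => obtain ⟨k, _, hα, _⟩ := npre_step_elim h; simp at hα
  | plusR _ h => obtain ⟨k, _, hα, _⟩ := npre_step_elim h; simp at hα

theorem Mw_tau_trace {s : Tm A V} (h : WTraceTo (Mw a m) [] s) : s = Mw a m := by
  cases h with
  | refl => rfl
  | tau hstep _ => exact absurd hstep Mw_no_tau

theorem Mw_trace_elim {w : List A} {s : Tm A V} (h : WTraceTo (Mw a m) w s) :
    (w = [] ∧ s = Mw a m) ∨
    (∃ i, 1 ≤ i ∧ w = rp a i ∧
      ((i ≤ m ∧ s = npre a (m - i) nil) ∨ (i ≤ 2*m ∧ s = npre a (2*m - i) nil))) := by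
  cases h with
  | refl => exact Or.inl ⟨rfl, rfl⟩
  | tau hstep _ => exact absurd hstep Mw_no_tau
  | @act r b r' w' s hstep htr =>
      cases hstep with
      | plusL _ h =>
          obtain ⟨k, hk, hα, rfl⟩ := npre_step_elim h
          obtain rfl : b = a := by injection hα
          obtain ⟨i, hi, rfl, rfl⟩ := npre_trace_elim htr
          refine Or.inr ⟨i + 1, by omega, by rw [rp_succ], Or.inl ⟨by omega, ?_⟩⟩
          congr 1
          omega
      | plusR _ h =>
          obtain ⟨k, hk, hα, rfl⟩ := npre_step_elim h
          obtain rfl : b = a := by injection hα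
          obtain ⟨i, hi, rfl, rfl⟩ := npre_trace_elim htr
          refine Or.inr ⟨i + 1, by omega, by rw [rp_succ], Or.inr ⟨by omega, ?_⟩⟩
          congr 1
          omega

theorem Mw_trace_left {i : ℕ} (h1 : 1 ≤ i) (h2 : i ≤ m) :
    WTraceTo (Mw a m) (rp a i) (npre a (m - i) (nil : Tm A V)) := by
  obtain ⟨k, rfl⟩ : ∃ k, m = k + 1 := ⟨m - 1, by omega⟩
  obtain ⟨j, rfl⟩ : ∃ j, i = j + 1 := ⟨i - 1, by omega⟩
  rw [rp_succ]
  refine WTraceTo.act (Step.plusL _ (by rw [npre_succ]; exact Step.pre _ _)) ?_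
  have := npre_trace_to (a := a) (i := j) (n := k) (V := V) (by omega)
  simpa [Nat.succ_sub_succ] using this

theorem Mw_trace_right {i : ℕ} (h1 : 1 ≤ i) (h2 : i ≤ 2*m) :
    WTraceTo (Mw a m) (rp a i) (npre a (2*m - i) (nil : Tm A V)) := by
  obtain ⟨k, hk⟩ : ∃ k, 2*m = k + 1 := ⟨2*m - 1, by omega⟩
  obtain ⟨j, rfl⟩ : ∃ j, i = j + 1 := ⟨i - 1, by omega⟩
  rw [rp_succ]
  have hstep : Step (Mw a m : Tm A V) (some a) (npre a k nil) := by
    refine Step.plusR _ ?_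
    rw [hk, npre_succ]
    exact Step.pre _ _
  refine WTraceTo.act hstep ?_
  have := npre_trace_to (a := a) (i := j) (n := k) (V := V) (by omega)
  have heq : 2*m - (j+1) = k - j := by omega
  rw [heq]
  exact this

theorem pw_step_elim {α : Option A} {s : Tm A V} (h : Step (pw a m) α s) :
    α = none ∧ (s = npre a (2*m) nil ∨ s = Mw a m) := by
  cases h with
  | plusL _ h => cases h; exact ⟨rfl, Or.inl rfl⟩
  | plusR _ h => cases h; exact ⟨rfl, Or.inr rfl⟩

theorem qw_step_elim {α : Option A} {s : Tm A V} (h : Step (qw a m) α s) :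
    α = none ∧ s = Mw a m := by
  cases h; exact ⟨rfl, rfl⟩

theorem pw_trace_elim {w : List A} {s : Tm A V} (h : WTraceTo (pw a m) w s) :
    (w = [] ∧ s = pw a m) ∨ WTraceTo (npre a (2*m) (nil : Tm A V)) w s ∨
      WTraceTo (Mw a m) w s := by
  cases h with
  | refl => exact Or.inl ⟨rfl, rfl⟩
  | tau hstep htr =>
      rcases pw_step_elim hstep with ⟨-, rfl | rfl⟩
      · exact Or.inr (Or.inl htr)
      · exact Or.inr (Or.inr htr)
  | act hstep htr => obtain ⟨h, -⟩ := pw_step_elim hstep; simp at h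

theorem qw_trace_elim {w : List A} {s : Tm A V} (h : WTraceTo (qw a m) w s) :
    (w = [] ∧ s = qw a m) ∨ WTraceTo (Mw a m) w s := by
  cases h with
  | refl => exact Or.inl ⟨rfl, rfl⟩
  | tau hstep htr => obtain ⟨-, rfl⟩ := qw_step_elim hstep; exact Or.inr htr
  | act hstep htr => obtain ⟨h, -⟩ := qw_step_elim hstep; simp at h

theorem WT_Mw : WT (Mw a m : Tm A V) = chainSet a (2*m) := by
  ext w
  constructor
  · rintro ⟨s, hs⟩
    rcases Mw_trace_elim hs with ⟨rfl, -⟩ | ⟨i, hi, rfl, ⟨h2, -⟩ | ⟨h2, -⟩⟩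
    · exact nil_mem_chainSet a _
    · exact rp_mem_chainSet.2 (by omega)
    · exact rp_mem_chainSet.2 h2
  · rintro ⟨i, hi, rfl⟩
    rcases Nat.eq_zero_or_pos i with rfl | hpos
    · exact ⟨_, WTraceTo.refl _⟩
    · exact ⟨_, Mw_trace_right hpos hi⟩

theorem WT_pw : WT (pw a m : Tm A V) = chainSet a (2*m) := by
  ext w
  constructor
  · rintro ⟨s, hs⟩
    rcases pw_trace_elim hs with ⟨rfl, -⟩ | h | h
    · exact nil_mem_chainSet a _
    · rw [← WT_npre]; exact ⟨s, h⟩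
    · rw [← WT_Mw (m := m)]; exact ⟨s, h⟩
  · intro hw
    rw [← WT_Mw (m := m)] at hw
    obtain ⟨s, hs⟩ := hw
    exact ⟨s, WTraceTo.tau (Step.plusR _ (Step.pre _ _)) hs⟩

theorem WT_qw : WT (qw a m : Tm A V) = chainSet a (2*m) := by
  ext w
  constructor
  · rintro ⟨s, hs⟩
    rcases qw_trace_elim hs with ⟨rfl, -⟩ | h
    · exact nil_mem_chainSet a _
    · rw [← WT_Mw (m := m)]; exact ⟨s, h⟩
  · intro hw
    rw [← WT_Mw (m := m)] at hw
    obtain ⟨s, hs⟩ := hw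
    exact ⟨s, WTraceTo.tau (Step.pre _ _) hs⟩

/-- The reachable states of `pw` after a nonempty trace `a^j`. -/
theorem pw_rep_deriv {j : ℕ} {s : Tm A V} (h : WTraceTo (pw a m) (rp a j) s) (hj : 1 ≤ j) :
    (j ≤ 2*m ∧ s = npre a (2*m - j) nil) ∨ (j ≤ m ∧ s = npre a (m - j) nil) := by
  have hne : rp a j ≠ [] := by rw [Ne, rp_eq_nil_iff]; omega
  rcases pw_trace_elim h with ⟨h', -⟩ | h' | h'
  · exact absurd h' hne
  · obtain ⟨i, hi, hw, rfl⟩ := npre_trace_elim h'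
    obtain rfl : j = i := rp_inj hw
    exact Or.inl ⟨hi, rfl⟩
  · rcases Mw_trace_elim h' with ⟨h'', -⟩ | ⟨i, hi, hw, ⟨h2, rfl⟩ | ⟨h2, rfl⟩⟩
    · exact absurd h'' hne
    · obtain rfl : j = i := rp_inj hw
      exact Or.inr ⟨h2, rfl⟩
    · obtain rfl : j = i := rp_inj hw
      exact Or.inl ⟨h2, rfl⟩

/-- Conversely, these states are reachable (from `qw`, hence from `pw` as well). -/
theorem qw_rep_deriv_right {j : ℕ} (h1 : 1 ≤ j) (h2 : j ≤ 2*m) :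
    WTraceTo (qw a m) (rp a j) (npre a (2*m - j) (nil : Tm A V)) :=
  WTraceTo.tau (Step.pre _ _) (Mw_trace_right h1 h2)

theorem qw_rep_deriv_left {j : ℕ} (h1 : 1 ≤ j) (h2 : j ≤ m) :
    WTraceTo (qw a m) (rp a j) (npre a (m - j) (nil : Tm A V)) :=
  WTraceTo.tau (Step.pre _ _) (Mw_trace_left h1 h2)

theorem pw_rep_deriv_right {j : ℕ} (h1 : 1 ≤ j) (h2 : j ≤ 2*m) :
    WTraceTo (pw a m) (rp a j) (npre a (2*m - j) (nil : Tm A V)) :=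
  WTraceTo.tau (Step.plusR _ (Step.pre _ _)) (Mw_trace_right h1 h2)

theorem pw_rep_deriv_left {j : ℕ} (h1 : 1 ≤ j) (h2 : j ≤ m) :
    WTraceTo (pw a m) (rp a j) (npre a (m - j) (nil : Tm A V)) :=
  WTraceTo.tau (Step.plusR _ (Step.pre _ _)) (Mw_trace_left h1 h2)

theorem closed_npre (n : ℕ) : Closed (npre a n (nil : Tm A V)) := by
  induction n with
  | zero => exact closed_nil
  | succ k ih => rw [npre_succ, closed_pre_iff]; exact ih

theorem closed_Mw : Closed (Mw a m : Tm A V) :=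
  closed_plus_iff.2 ⟨closed_npre m, closed_npre (2*m)⟩

theorem closed_pw : Closed (pw a m : Tm A V) :=
  closed_plus_iff.2 ⟨closed_pre_iff.2 (closed_npre (2*m)), closed_pre_iff.2 closed_Mw⟩

theorem closed_qw : Closed (qw a m : Tm A V) := closed_pre_iff.2 closed_Mw
/-! ### Basic properties of weak impossible futures equivalence -/

theorem wifle_refl (p : Tm A V) : WIFle p p :=
  ⟨fun _ _ h => h, rfl, fun h => h⟩

theorem wifle_trans {p q r : Tm A V} (h₁ : WIFle p q) (h₂ : WIFle q r) : WIFle p r :=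
  ⟨fun w B h => h₂.1 w B (h₁.1 w B h), h₁.2.1.trans h₂.2.1, fun h => h₂.2.2 (h₁.2.2 h)⟩

theorem wifeq_refl (p : Tm A V) : WIFeq p p := ⟨wifle_refl p, wifle_refl p⟩

theorem wifeq_symm {p q : Tm A V} (h : WIFeq p q) : WIFeq q p := ⟨h.2, h.1⟩

theorem wifeq_trans {p q r : Tm A V} (h₁ : WIFeq p q) (h₂ : WIFeq q r) : WIFeq p r :=
  ⟨wifle_trans h₁.1 h₂.1, wifle_trans h₂.2 h₁.2⟩

theorem WT_eq_of_wifeq {p q : Tm A V} (h : WIFeq p q) : WT p = WT q := h.1.2.1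

/-! ### The two witness terms are weak impossible futures equivalent -/

theorem wifeq_pw_qw {a : A} {m : ℕ} : WIFeq (pw a m : Tm A V) (qw a m) := by
  have hWT : WT (pw a m : Tm A V) = WT (qw a m : Tm A V) := by rw [WT_pw, WT_qw]
  constructor
  · refine ⟨?_, hWT, fun _ => ⟨Mw a m, Step.pre _ _⟩⟩
    rintro w B ⟨s, htr, hB⟩
    rcases pw_trace_elim htr with ⟨rfl, rfl⟩ | h | h
    · exact ⟨qw a m, WTraceTo.refl _, fun u hu => hB u (by rwa [hWT])⟩
    · obtain ⟨i, hi, rfl, rfl⟩ := npre_trace_elim h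
      rcases Nat.eq_zero_or_pos i with rfl | hpos
      · refine ⟨qw a m, WTraceTo.refl _, fun u hu => hB u ?_⟩
        rw [WT_npre]
        simp only [Nat.sub_zero]
        rw [WT_qw] at hu
        exact hu
      · exact ⟨_, qw_rep_deriv_right hpos hi, hB⟩
    · exact ⟨s, WTraceTo.tau (Step.pre _ _) h, hB⟩
  · refine ⟨?_, hWT.symm, fun _ => ⟨npre a (2*m) nil, Step.plusL _ (Step.pre _ _)⟩⟩
    rintro w B ⟨s, htr, hB⟩
    rcases qw_trace_elim htr with ⟨rfl, rfl⟩ | h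
    · exact ⟨pw a m, WTraceTo.refl _, fun u hu => hB u (by rwa [← hWT])⟩
    · exact ⟨s, WTraceTo.tau (Step.plusR _ (Step.pre _ _)) h, hB⟩

/-! ### The invariant -/

/-- The key property: `x` can do `a^{2m}` and every weak `a^m`-derivative of `x`
can still do `a^m`. -/
def Psi (a : A) (m : ℕ) (x : Tm A V) : Prop :=
  rp a (2*m) ∈ WT x ∧ ∀ s, WTraceTo x (rp a m) s → rp a m ∈ WT s

/-- `x` has a proper (≥ 1 τ-step) weak τ-derivative satisfying `Psi`. -/
def Phip (a : A) (m : ℕ) (x : Tm A V) : Prop :=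
  ∃ x₀ x', Step x none x₀ ∧ WTraceTo x₀ [] x' ∧ Psi a m x'

/-- `x` has a weak τ-derivative satisfying `Psi`. -/
def Phi (a : A) (m : ℕ) (x : Tm A V) : Prop :=
  ∃ x', WTraceTo x [] x' ∧ Psi a m x'

theorem phip_phi {a : A} {m : ℕ} {x : Tm A V} (h : Phip a m x) : Phi a m x := by
  obtain ⟨x₀, x', hstep, htr, hx⟩ := h
  exact ⟨x', WTraceTo.tau hstep htr, hx⟩

theorem psi_transfer {a : A} {m : ℕ} {x y : Tm A V} (hxy : WIFeq x y) (h : Psi a m x) :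
    Psi a m y := by
  refine ⟨by rw [← WT_eq_of_wifeq hxy]; exact h.1, ?_⟩
  intro s htr
  by_contra hs
  have hwif : WImpFut y (rp a m) {rp a m} :=
    ⟨s, htr, fun u hu hmem => hs (Set.mem_singleton_iff.1 hmem ▸ hu)⟩
  obtain ⟨s', htr', hB⟩ := hxy.2.1 _ _ hwif
  exact hB (rp a m) (h.2 s' htr') rfl

theorem phip_pw {a : A} {m : ℕ} (hm : 1 ≤ m) : Phip a m (pw a m : Tm A V) := by
  refine ⟨npre a (2*m) nil, npre a (2*m) nil, Step.plusL _ (Step.pre _ _),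
    WTraceTo.refl _, ?_, ?_⟩
  · rw [WT_npre]; exact rp_mem_chainSet.2 le_rfl
  · intro s htr
    obtain ⟨i, hi, hw, rfl⟩ := npre_trace_elim htr
    obtain rfl : m = i := rp_inj hw
    rw [WT_npre]
    exact rp_mem_chainSet.2 (by omega)

theorem not_phi_qw {a : A} {m : ℕ} (hm : 1 ≤ m) : ¬ Phi a m (qw a m : Tm A V) := by
  rintro ⟨x', htr, hPsi⟩
  have hdead : WTraceTo x' (rp a m) (nil : Tm A V) := by
    rcases qw_trace_elim htr with ⟨-, rfl⟩ | h
    · have := qw_rep_deriv_left (a := a) (m := m) (V := V) hm le_rfl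
      rw [Nat.sub_self] at this
      exact this
    · obtain rfl := Mw_tau_trace h
      have := Mw_trace_left (a := a) (m := m) (V := V) hm le_rfl
      rw [Nat.sub_self] at this
      exact this
  have := hPsi.2 nil hdead
  rw [WT_nil_eq] at this
  have : rp a m = [] := this
  rw [rp_eq_nil_iff] at this
  omega

/-! ### The `Good` class property -/

/-- The structural properties enjoyed by every term in the `≃`-class of `pw`,
and inherited by subterm positions along `+` and `τ.`-contexts. -/
def Good (a : A) (m : ℕ) (r : Tm A V) : Prop :=
  WT r ⊆ chainSet a (2*m) ∧
  (∀ x₀ x, Step r none x₀ → WTraceTo x₀ [] x → rp a (2*m) ∈ WT x) ∧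
  (∀ j x, 1 ≤ j → j ≤ 2*m → WTraceTo r (rp a j) x →
     rp a (m - j) ∈ WT x ∧ WT x ⊆ chainSet a (2*m - j) ∧ (m < j → rp a (2*m - j) ∈ WT x))

theorem good_of_wifeq_pw {a : A} {m : ℕ} {r : Tm A V} (hm : 1 ≤ m)
    (h : WIFeq r (pw a m)) : Good a m r := by
  have hWT : WT r = chainSet a (2*m) := by rw [WT_eq_of_wifeq h, WT_pw]
  refine ⟨hWT.le, ?_, ?_⟩
  · intro x₀ x hstep htr
    by_contra hx
    have hwif : WImpFut r [] {rp a (2*m)} :=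
      ⟨x, WTraceTo.tau hstep htr, fun u hu hmem => hx (Set.mem_singleton_iff.1 hmem ▸ hu)⟩
    obtain ⟨s, htr', hB⟩ := h.1.1 _ _ hwif
    rcases pw_trace_elim htr' with ⟨-, rfl⟩ | h' | h'
    · exact hB (rp a (2*m)) (by rw [WT_pw]; exact rp_mem_chainSet.2 le_rfl) rfl
    · obtain rfl := npre_tau_trace h'
      exact hB (rp a (2*m)) (by rw [WT_npre]; exact rp_mem_chainSet.2 le_rfl) rfl
    · obtain rfl := Mw_tau_trace h'
      exact hB (rp a (2*m)) (by rw [WT_Mw]; exact rp_mem_chainSet.2 le_rfl) rfl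
  · intro j x hj hj2 htr
    refine ⟨?_, ?_, ?_⟩
    · by_contra hx
      have hwif : WImpFut r (rp a j) {rp a (m - j)} :=
        ⟨x, htr, fun u hu hmem => hx (Set.mem_singleton_iff.1 hmem ▸ hu)⟩
      obtain ⟨s, htr', hB⟩ := h.1.1 _ _ hwif
      rcases pw_rep_deriv htr' hj with ⟨h2, rfl⟩ | ⟨h2, rfl⟩
      · exact hB (rp a (m - j)) (by rw [WT_npre]; exact rp_mem_chainSet.2 (by omega)) rfl
      · exact hB (rp a (m - j)) (by rw [WT_npre]; exact rp_mem_chainSet.2 (by omega)) rfl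
    · intro u hu
      have : rp a j ++ u ∈ WT r := WT_mono_of_trace htr u hu
      rw [hWT] at this
      obtain ⟨i, hi, hiw⟩ := this
      obtain ⟨j', j'', hsum, hj', rfl⟩ := rp_append_split hiw
      obtain rfl : j' = j := (rp_inj hj').symm
      exact rp_mem_chainSet.2 (by omega)
    · intro hmj
      by_contra hx
      have hwif : WImpFut r (rp a j) {rp a (2*m - j)} :=
        ⟨x, htr, fun u hu hmem => hx (Set.mem_singleton_iff.1 hmem ▸ hu)⟩
      obtain ⟨s, htr', hB⟩ := h.1.1 _ _ hwif
      rcases pw_rep_deriv htr' hj with ⟨h2, rfl⟩ | ⟨h2, rfl⟩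
      · exact hB (rp a (2*m - j)) (by rw [WT_npre]; exact rp_mem_chainSet.2 le_rfl) rfl
      · omega

/-! ### `Good` descends to subterm positions -/

theorem good_plusL {a : A} {m : ℕ} {x v : Tm A V} (h : Good a m (plus x v)) : Good a m x := by
  refine ⟨?_, ?_, ?_⟩
  · rintro w ⟨s, hs⟩
    rcases wtrace_cases hs with ⟨rfl, -⟩ | hent
    · exact nil_mem_chainSet a _
    · exact h.1 ⟨s, ent_wtrace (ent_plusL hent)⟩
  · intro x₀ x' hstep htr
    exact h.2.1 x₀ x' (Step.plusL _ hstep) htr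
  · intro j x' hj hj2 htr
    rcases wtrace_cases htr with ⟨hw, -⟩ | hent
    · rw [rp_eq_nil_iff] at hw; omega
    · exact h.2.2 j x' hj hj2 (ent_wtrace (ent_plusL hent))

theorem good_plusR {a : A} {m : ℕ} {x v : Tm A V} (h : Good a m (plus v x)) : Good a m x := by
  refine ⟨?_, ?_, ?_⟩
  · rintro w ⟨s, hs⟩
    rcases wtrace_cases hs with ⟨rfl, -⟩ | hent
    · exact nil_mem_chainSet a _
    · exact h.1 ⟨s, ent_wtrace (ent_plusR hent)⟩
  · intro x₀ x' hstep htr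
    exact h.2.1 x₀ x' (Step.plusR _ hstep) htr
  · intro j x' hj hj2 htr
    rcases wtrace_cases htr with ⟨hw, -⟩ | hent
    · rw [rp_eq_nil_iff] at hw; omega
    · exact h.2.2 j x' hj hj2 (ent_wtrace (ent_plusR hent))

theorem good_pre_none {a : A} {m : ℕ} {x : Tm A V} (h : Good a m (pre none x)) :
    Good a m x := by
  refine ⟨?_, ?_, ?_⟩
  · rintro w ⟨s, hs⟩
    exact h.1 ⟨s, WTraceTo.tau (Step.pre _ _) hs⟩
  · intro x₀ x' hstep htr
    exact h.2.1 x x' (Step.pre _ _) (WTraceTo.tau hstep htr)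
  · intro j x' hj hj2 htr
    exact h.2.2 j x' hj hj2 (WTraceTo.tau (Step.pre _ _) htr)
/-! ### Contexts and one-step rewriting -/

end Dev
end Tm

/-- One-hole contexts for BCCS terms. -/
inductive Ctx (A V : Type) : Type
  | hole : Ctx A V
  | plusL : Ctx A V → Tm A V → Ctx A V
  | plusR : Tm A V → Ctx A V → Ctx A V
  | pre : Option A → Ctx A V → Ctx A V

/-- Filling the hole of a context. -/
def Ctx.fill {A V : Type} : Ctx A V → Tm A V → Tm A V
  | Ctx.hole, x => x
  | Ctx.plusL C v, x => Tm.plus (C.fill x) v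
  | Ctx.plusR v C, x => Tm.plus v (C.fill x)
  | Ctx.pre α C, x => Tm.pre α (C.fill x)

/-- Composition of contexts. -/
def Ctx.comp {A V : Type} : Ctx A V → Ctx A V → Ctx A V
  | Ctx.hole, D => D
  | Ctx.plusL C v, D => Ctx.plusL (C.comp D) v
  | Ctx.plusR v C, D => Ctx.plusR v (C.comp D)
  | Ctx.pre α C, D => Ctx.pre α (C.comp D)

/-- Applying a substitution to the rigid part of a context. -/
def Ctx.substC {A V : Type} (σ : V → Tm A V) : Ctx A V → Ctx A V
  | Ctx.hole => Ctx.hole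
  | Ctx.plusL C v => Ctx.plusL (C.substC σ) (Tm.subst σ v)
  | Ctx.plusR v C => Ctx.plusR (Tm.subst σ v) (C.substC σ)
  | Ctx.pre α C => Ctx.pre α (C.substC σ)

namespace Tm
section Dev2

variable {A V : Type}

theorem _root_.Ctx.fill_comp (C D : Ctx A V) (x : Tm A V) :
    (C.comp D).fill x = C.fill (D.fill x) := by
  induction C with
  | hole => rfl
  | plusL C v ih => simp [Ctx.comp, Ctx.fill, ih]
  | plusR v C ih => simp [Ctx.comp, Ctx.fill, ih]
  | pre α C ih => simp [Ctx.comp, Ctx.fill, ih]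

theorem _root_.Ctx.subst_fill (σ : V → Tm A V) (C : Ctx A V) (x : Tm A V) :
    Tm.subst σ (C.fill x) = (C.substC σ).fill (Tm.subst σ x) := by
  induction C with
  | hole => rfl
  | plusL C v ih => simp [Ctx.substC, Ctx.fill, Tm.subst, ih]
  | plusR v C ih => simp [Ctx.substC, Ctx.fill, Tm.subst, ih]
  | pre α C ih => simp [Ctx.substC, Ctx.fill, Tm.subst, ih]

theorem deriv_fill {R : Tm A V → Tm A V → Prop} {x y : Tm A V} (C : Ctx A V)
    (h : Deriv R x y) : Deriv R (C.fill x) (C.fill y) := by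
  induction C with
  | hole => exact h
  | plusL C v ih => exact Deriv.plus ih (Deriv.refl v)
  | plusR v C ih => exact Deriv.plus (Deriv.refl v) ih
  | pre α C ih => exact Deriv.pre α ih

/-- A single rewrite step: an instance of an axiom (in either direction) inside a context. -/
def OneStep (R : Tm A V → Tm A V → Prop) (r r' : Tm A V) : Prop :=
  ∃ (C : Ctx A V) (t u : Tm A V) (σ : V → Tm A V),
    (R t u ∨ R u t) ∧ r = C.fill (subst σ t) ∧ r' = C.fill (subst σ u)

theorem onestep_symm {R : Tm A V → Tm A V → Prop} {r r' : Tm A V}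
    (h : OneStep R r r') : OneStep R r' r := by
  obtain ⟨C, t, u, σ, htu, h1, h2⟩ := h
  exact ⟨C, u, t, σ, htu.symm, h2, h1⟩

theorem onestep_fill {R : Tm A V → Tm A V → Prop} {r r' : Tm A V} (C : Ctx A V)
    (h : OneStep R r r') : OneStep R (C.fill r) (C.fill r') := by
  obtain ⟨D, t, u, σ, htu, rfl, rfl⟩ := h
  exact ⟨C.comp D, t, u, σ, htu, (Ctx.fill_comp C D _).symm, (Ctx.fill_comp C D _).symm⟩

theorem onestep_subst {R : Tm A V → Tm A V → Prop} {r r' : Tm A V} (σ : V → Tm A V)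
    (h : OneStep R r r') : OneStep R (subst σ r) (subst σ r') := by
  obtain ⟨C, t, u, ρ, htu, rfl, rfl⟩ := h
  refine ⟨C.substC σ, t, u, fun x => subst σ (ρ x), htu, ?_, ?_⟩
  · rw [Ctx.subst_fill, subst_subst]
  · rw [Ctx.subst_fill, subst_subst]

theorem onestep_deriv {R : Tm A V → Tm A V → Prop} {r r' : Tm A V}
    (h : OneStep R r r') : Deriv R r r' := by
  obtain ⟨C, t, u, σ, htu, rfl, rfl⟩ := h
  refine deriv_fill C ?_
  rcases htu with h | h
  · exact Deriv.inst σ h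
  · exact Deriv.symm (Deriv.inst σ h)

theorem rtg_symm {α : Type*} {r : α → α → Prop} (hsym : ∀ a b, r a b → r b a)
    {x y : α} (h : Relation.ReflTransGen r x y) : Relation.ReflTransGen r y x := by
  induction h with
  | refl => exact Relation.ReflTransGen.refl
  | tail _ hstep ih =>
      exact Relation.ReflTransGen.trans (Relation.ReflTransGen.single (hsym _ _ hstep)) ih

theorem rtg_fill {R : Tm A V → Tm A V → Prop} {x y : Tm A V} (C : Ctx A V)
    (h : Relation.ReflTransGen (OneStep R) x y) :
    Relation.ReflTransGen (OneStep R) (C.fill x) (C.fill y) :=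
  Relation.ReflTransGen.lift C.fill (fun _ _ hab => onestep_fill C hab) _ _ h

theorem deriv_rtg {R : Tm A V → Tm A V → Prop} {x y : Tm A V}
    (h : Deriv R x y) : Relation.ReflTransGen (OneStep R) x y := by
  induction h with
  | @ax t u h =>
      refine Relation.ReflTransGen.single ⟨Ctx.hole, t, u, fun z => var z, Or.inl h, ?_, ?_⟩ <;>
        simp [Ctx.fill, subst_var]
  | @inst t u σ h =>
      exact Relation.ReflTransGen.single ⟨Ctx.hole, t, u, σ, Or.inl h, rfl, rfl⟩
  | refl t => exact Relation.ReflTransGen.refl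
  | symm _ ih => exact rtg_symm (fun _ _ => onestep_symm) ih
  | trans _ _ ih₁ ih₂ => exact Relation.ReflTransGen.trans ih₁ ih₂
  | @pre α t u _ ih => exact rtg_fill (Ctx.pre α Ctx.hole) ih
  | @plus t u t' u' _ _ ih₁ ih₂ =>
      refine Relation.ReflTransGen.trans
        (rtg_fill (Ctx.plusL Ctx.hole u) ih₁) (rtg_fill (Ctx.plusR t' Ctx.hole) ih₂)
/-! ### The core lemma: one axiom step at the root -/

theorem wdepth_wtrace_le {t t' : Tm A V} {w : List A} (h : WTraceTo t w t') :
    wdepth t' ≤ wdepth t := by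
  induction h with
  | refl => exact le_rfl
  | tau hstep _ ih => exact le_trans ih (wdepth_step_le hstep)
  | act hstep _ ih => exact le_trans ih (le_of_lt (wdepth_step_lt hstep))

/-- `y` occurs initially in some state reachable from `t` via the weak trace `a^k`. -/
def PairP (a : A) (t : Tm A V) (k : ℕ) (y : V) : Prop :=
  ∃ t', WTraceTo t (rp a k) t' ∧ y ∈ initVars t'

/-- `σ y` is "defective at level `k`": it has a weak `a^{m-k}`-derivative that
cannot (weakly) perform `a^m`. -/
def dirtyP (a : A) (m : ℕ) (σ : V → Tm A V) (y : V) (k : ℕ) : Prop :=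
  ∃ s, WTraceTo (σ y) (rp a (m - k)) s ∧ rp a m ∉ WT s

theorem pair_trace {σ : V → Tm A V} {v v' s : Tm A V} {k : ℕ} {y : V} {w : List A}
    (h1 : WTraceTo v (rp a k) v') (h2 : y ∈ initVars v') (h3 : WTraceTo (σ y) w s)
    (h4 : w ≠ []) : WTraceTo (subst σ v) (rp a k ++ w) s := by
  refine wtrace_comp (wtrace_subst_lift h1) ?_
  rcases wtrace_initVar h2 h3 with ⟨rfl, -⟩ | h
  · exact absurd rfl h4
  · exact h

theorem rp_ne_nil {n : ℕ} (h : 1 ≤ n) : rp a n ≠ [] := by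
  rw [Ne, rp_eq_nil_iff]; omega

/-- In the `Good` world, all defects are dead ends. -/
theorem dirty_dead {σ : V → Tm A V} {v : Tm A V} {k : ℕ} {y : V} (hm : 1 ≤ m)
    (hG : Good a m (subst σ v)) (hp : PairP a v k y) (hk : k < m)
    (hd : dirtyP a m σ y k) :
    ∃ s, WTraceTo (σ y) (rp a (m - k)) s ∧ ∀ w ∈ WT s, w = [] := by
  obtain ⟨s, hs, hnot⟩ := hd
  obtain ⟨v', hv', hy⟩ := hp
  have hkm : k + (m - k) = m := by omega
  have htrm : WTraceTo (subst σ v) (rp a m) s := by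
    have := pair_trace hv' hy hs (rp_ne_nil (by omega))
    rwa [← rp_add, hkm] at this
  refine ⟨s, hs, ?_⟩
  intro w' hw'
  by_contra hne
  obtain ⟨-, hsub, -⟩ := hG.2.2 m s hm (by omega) htrm
  obtain ⟨i, hi, rfl⟩ := hsub hw'
  have hipos : 1 ≤ i := by
    rcases Nat.eq_zero_or_pos i with rfl | h
    · exact absurd rfl hne
    · exact h
  obtain ⟨s₂, htr₂⟩ := hw'
  have hsplit : rp a i = rp a 1 ++ rp a (i - 1) := by
    rw [← rp_add]; congr 1; omega
  rw [hsplit] at htr₂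
  obtain ⟨s₁, h1, -⟩ := wtrace_split htr₂
  have htrm1 : WTraceTo (subst σ v) (rp a (m + 1)) s₁ := by
    have := wtrace_comp htrm h1
    rwa [← rp_add] at this
  obtain ⟨-, -, h3⟩ := hG.2.2 (m + 1) s₁ (by omega) (by omega) htrm1
  have h3 := h3 (by omega)
  have : rp a 1 ++ rp a (2*m - (m+1)) ∈ WT s := WT_mono_of_trace h1 _ h3
  rw [← rp_add] at this
  have heq : 1 + (2*m - (m+1)) = m := by omega
  rw [heq] at this
  exact hnot this

/-- In the `Good` world, a dead end inside a variable sits at total depth exactly `m`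
(given the bounds we use). -/
theorem dead_depth {σ : V → Tm A V} {v : Tm A V} {k l : ℕ} {y : V} {s : Tm A V}
    (hG : Good a m (subst σ v)) (hp : PairP a v k y) (hk : k < m) (hl : 1 ≤ l)
    (hl2 : l ≤ m) (hs : WTraceTo (σ y) (rp a l) s) (hdead : ∀ w ∈ WT s, w = []) :
    k + l = m := by
  obtain ⟨v', hv', hy⟩ := hp
  have htr : WTraceTo (subst σ v) (rp a (k + l)) s := by
    have := pair_trace hv' hy hs (rp_ne_nil hl)
    rwa [← rp_add] at this
  obtain ⟨h1, -, h3⟩ := hG.2.2 (k + l) s (by omega) (by omega) htr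
  have hml : m - (k + l) = 0 := by
    have := hdead _ h1
    rwa [rp_eq_nil_iff] at this
  by_contra hne
  have hlt : m < k + l := by omega
  have := hdead _ (h3 hlt)
  rw [rp_eq_nil_iff] at this
  omega

/-- CASE B of the core lemma: the witness of `Phip (subst σ t)` lives inside a
variable `x` that is weakly initial in `t`; transfer via a single-variable probe. -/
theorem core_caseB {t u : Tm A V} {σ : V → Tm A V}
    {t₂ s₀ r' : Tm A V} {x : V} (hm : 1 ≤ m) (hdu : wdepth u < m)
    (hρ : ∀ ρ : V → Tm A V, (∀ y, Closed (ρ y)) → WIFeq (subst ρ t) (subst ρ u))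
    (htr₂ : WTraceTo t [] t₂) (hx : x ∈ initVars t₂)
    (hstep₀ : Step (σ x) none s₀) (htr₀ : WTraceTo s₀ [] r') (hPsi : Psi a m r') :
    Phip a m (subst σ u) := by
  classical
  set ρb : V → Tm A V := fun y => if y = x then pre none (npre a (3*m) nil) else nil with hρb
  have hρbcl : ∀ y, Closed (ρb y) := by
    intro y
    simp only [hρb]
    split
    · exact closed_pre_iff.2 (closed_npre _)
    · exact closed_nil
  have hρbx : ρb x = pre none (npre a (3*m) nil) := by simp [hρb]
  -- the t-side can reach a dead end after exactly a^{3m}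
  have htside : WTraceTo (subst ρb t) (rp a (3*m)) (nil : Tm A V) := by
    refine wtrace_comp (w₁ := []) (wtrace_subst_lift htr₂) ?_
    refine WTraceTo.tau (step_initVar hx (by rw [hρbx]; exact Step.pre _ _)) ?_
    have := npre_trace_to (a := a) (V := V) (i := 3*m) (n := 3*m) le_rfl
    simpa [npre, rp] using this
  have hwif : WImpFut (subst ρb t) (rp a (3*m)) {w | w ≠ []} := by
    refine ⟨nil, htside, ?_⟩
    intro w hw
    rw [WT_nil_eq] at hw
    have : w = [] := hw
    simp [this]
  obtain ⟨x', htr', hB⟩ := (hρ ρb hρbcl).1.1 _ _ hwif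
  -- decompose the u-side witness
  rcases wtrace_subst_decompose htr' with ⟨u₁, htru, rfl⟩ | ⟨w₁, w₂, u₂, y, hw, htru, hy, hent⟩
  · exfalso
    have := wtrace_length_le_wdepth htru
    rw [rp_length] at this
    omega
  · obtain ⟨i, j, hij, rfl, rfl⟩ := rp_append_split hw.symm
    have hi : i < m := by
      have := wtrace_length_le_wdepth htru
      rw [rp_length] at this
      omega
    -- the entered variable must be x, entered at depth 0
    have hyx : y = x := by
      by_contra hne
      have : ρb y = nil := by simp [hρb, hne]
      rcases hent with ⟨z, hz, -⟩ | ⟨b, w', z, -, hz, -⟩ <;> rw [this] at hz <;>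
        exact step_nil_elim hz
    subst hyx
    rw [hρbx] at hent
    have hj : j = 3*m ∧ x' = npre a (3*m - j) nil := by
      rcases hent with ⟨z, hz, htz⟩ | ⟨b, w', z, hbw, hz, -⟩
      · cases hz
        obtain ⟨i', hi', hw', rfl⟩ := npre_trace_elim htz
        obtain rfl : j = i' := rp_inj hw'
        constructor
        · by_contra hne
          have hmem : rp a (3*m - j) ∈ WT (npre a (3*m - j) (nil : Tm A V)) := by
            rw [WT_npre]; exact rp_mem_chainSet.2 le_rfl
          have := hB _ hmem
          simp only [Set.mem_setOf_eq, Ne, not_not] at this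
          rw [rp_eq_nil_iff] at this
          omega
        · rfl
      · cases hz
    obtain ⟨rfl, -⟩ := hj
    obtain rfl : i = 0 := by omega
    -- rebuild the witness in `subst σ u`
    have hstepu : Step (subst σ u₂) none s₀ := step_initVar hy hstep₀
    have hmid : WTraceTo (subst σ u) [] (subst σ u₂) := by
      have := wtrace_subst_lift (σ := σ) htru
      simpa [rp_zero] using this
    clear htr' hB hent
    -- walk to the step
    generalize hZ : subst σ u₂ = Z at hstepu hmid
    clear hZ
    generalize hU : subst σ u = U at hmid ⊢
    clear hU
    generalize hww : ([] : List A) = ww at hmid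
    induction hmid with
    | refl => exact ⟨s₀, r', hstepu, htr₀, hPsi⟩
    | tau h1 h2 ih =>
        obtain ⟨y₀, y', hsy, hty, hpy⟩ := ih hstepu hww
        exact ⟨_, y', h1, WTraceTo.tau hsy hty, hpy⟩
    | act h1 h2 ih => exact (nomatch hww)
/-- CASE A of the core lemma: the witness of `Phip (subst σ t)` is of the form
`subst σ t₁` for a syntactic τ-derivative `t₁` of `t`. -/
theorem core_caseA {t u : Tm A V} {σ : V → Tm A V}
    {t₁ : Tm A V} (hm : 1 ≤ m) (hdt : wdepth t < m) (hdu : wdepth u < m)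
    (hσ : ∀ y, Closed (σ y))
    (hρ : ∀ ρ : V → Tm A V, (∀ y, Closed (ρ y)) → WIFeq (subst ρ t) (subst ρ u))
    (hGA : Good a m (subst σ t)) (hGB : Good a m (subst σ u))
    (hAτ : ∃ b₀, Step (subst σ t) none b₀)
    (htr₁ : WTraceTo t [] t₁) (hPsi : Psi a m (subst σ t₁)) :
    Phip a m (subst σ u) := by
  classical
  -- the cluster of t₁ is clean
  have hclean : ∀ k y, k < m → PairP a t₁ k y → ¬ dirtyP a m σ y k := by
    rintro k y hk ⟨t₂, htr₂, hy⟩ ⟨s, hs, hnot⟩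
    have hkm : k + (m - k) = m := by omega
    have : WTraceTo (subst σ t₁) (rp a m) s := by
      have := pair_trace htr₂ hy hs (rp_ne_nil (by omega))
      rwa [← rp_add, hkm] at this
    exact hnot (hPsi.2 s this)
  -- the dirty variables
  set DV : V → Prop :=
    fun y => ∃ k, k < m ∧ (PairP a t k y ∨ PairP a u k y) ∧ dirtyP a m σ y k with hDV
  set ρs : V → Tm A V := fun y => if DV y then npre a (5*m) nil else nil with hρs
  have hρscl : ∀ y, Closed (ρs y) := by
    intro y
    simp only [hρs]
    split
    · exact closed_npre _
    · exact closed_nil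
  -- variables in the cluster of t₁ are not dirty
  have hND : ∀ k y, k < m → PairP a t₁ k y → ¬ DV y := by
    rintro k y hk hp ⟨k₀, hk₀, hpside, hd₀⟩
    by_cases hkk : k₀ = k
    · subst hkk; exact hclean k₀ y hk hp hd₀
    · have hpt : PairP a t k y := by
        obtain ⟨t₂, htr₂, hy⟩ := hp
        exact ⟨t₂, by simpa using wtrace_comp htr₁ htr₂, hy⟩
      obtain ⟨s, hs, hdead⟩ : ∃ s, WTraceTo (σ y) (rp a (m - k₀)) s ∧ ∀ w ∈ WT s, w = [] := by
        rcases hpside with hside | hside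
        · exact dirty_dead hm hGA hside hk₀ hd₀
        · exact dirty_dead hm hGB hside hk₀ hd₀
      have := dead_depth hGA hpt hk (l := m - k₀) (by omega) (by omega) hs hdead
      omega
  -- the t-side passes the probe test
  have hXt : ∀ w ∈ WT (subst ρs t₁), ¬ (4*m ≤ w.length) := by
    rintro w ⟨s, hs⟩ hlen
    rcases wtrace_subst_decompose hs with ⟨t', htr', rfl⟩ | ⟨w₁, w₂, t₂, y, rfl, htr₂, hy, hent⟩
    · have h1 := wtrace_length_le_wdepth htr'
      have h2 := wdepth_wtrace_le htr₁
      omega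
    · by_cases hDy : DV y
      · -- w₁ is a chain of a's of length < m, giving a pair of the clean cluster
        have hw₁ : w₁ ∈ WT (subst σ t) := by
          have hl : WTraceTo (subst σ t) [] (subst σ t₁) := wtrace_subst_lift htr₁
          exact WT_tau_sub hl ⟨subst σ t₂, wtrace_subst_lift htr₂⟩
        obtain ⟨k, hk2, rfl⟩ := hGA.1 hw₁
        have hk : k < m := by
          have h1 := wtrace_length_le_wdepth htr₂
          have h2 := wdepth_wtrace_le htr₁
          rw [rp_length] at h1
          omega
        exact hND k y hk ⟨t₂, htr₂, hy⟩ hDy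
      · have hnil : ρs y = nil := by simp [hρs, hDy]
        rcases hent with ⟨z, hz, -⟩ | ⟨b, w', z, -, hz, -⟩ <;> rw [hnil] at hz <;>
          exact step_nil_elim hz
  have hwif : WImpFut (subst ρs t) [] {w | 4*m ≤ w.length} :=
    ⟨subst ρs t₁, wtrace_subst_lift htr₁, fun w hw hmem => hXt w hw hmem⟩
  obtain ⟨x', htr', hB⟩ := (hρ ρs hρscl).1.1 _ _ hwif
  -- the u-side witness is a syntactic τ-derivative
  obtain ⟨u₁, htru, rfl⟩ :
      ∃ u₁, WTraceTo u [] u₁ ∧ x' = subst ρs u₁ := by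
    rcases wtrace_subst_decompose htr' with ⟨u₁, htru, rfl⟩ | ⟨w₁, w₂, u₂, y, hw, -, -, hent⟩
    · exact ⟨u₁, htru, rfl⟩
    · exfalso
      obtain ⟨rfl, rfl⟩ := List.append_eq_nil_iff.1 hw.symm
      rcases hent with ⟨z, hz, -⟩ | ⟨b, w', z, hbw, hz, -⟩
      · by_cases hDy : DV y
        · rw [show ρs y = npre a (5*m) nil by simp [hρs, hDy]] at hz
          obtain ⟨k', -, hα, -⟩ := npre_step_elim hz
          simp at hα
        · rw [show ρs y = nil by simp [hρs, hDy]] at hz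
          exact step_nil_elim hz
      · exact nomatch hbw
  -- the cluster of u₁ is clean
  have huclean : ∀ k y, k < m → PairP a u₁ k y → ¬ dirtyP a m σ y k := by
    rintro k y hk hp hd
    have hDy : DV y := by
      refine ⟨k, hk, Or.inr ?_, hd⟩
      obtain ⟨u₂, htr₂, hy⟩ := hp
      exact ⟨u₂, by simpa using wtrace_comp htru htr₂, hy⟩
    obtain ⟨u₂, htr₂, hy⟩ := hp
    have hgad : WTraceTo (ρs y) (rp a (5*m)) (nil : Tm A V) := by
      rw [show ρs y = npre a (5*m) nil by simp [hρs, hDy]]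
      have := npre_trace_to (a := a) (V := V) (i := 5*m) (n := 5*m) le_rfl
      simpa [npre, rp] using this
    have hlong : rp a k ++ rp a (5*m) ∈ WT (subst ρs u₁) :=
      ⟨nil, pair_trace htr₂ hy hgad (rp_ne_nil (by omega))⟩
    have := hB _ hlong
    rw [← rp_add, Set.mem_setOf_eq, rp_length] at this
    omega
  -- clean clusters yield the Psi property
  have hmain2 : ∀ v : Tm A V, WTraceTo u [] v →
      (∀ k y, k < m → PairP a v k y → ¬ dirtyP a m σ y k) →
      ∀ s, WTraceTo (subst σ v) (rp a m) s → rp a m ∈ WT s := by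
    intro v htrv hvclean s htrs
    rcases wtrace_subst_decompose htrs with ⟨v', htr', rfl⟩ | ⟨w₁, w₂, v₂, y, hw, htr₂, hy, hent⟩
    · exfalso
      have h1 := wtrace_length_le_wdepth htr'
      have h2 := wdepth_wtrace_le htrv
      rw [rp_length] at h1
      omega
    · obtain ⟨i, j, hij, rfl, rfl⟩ := rp_append_split hw.symm
      have hi : i < m := by
        have h1 := wtrace_length_le_wdepth htr₂
        have h2 := wdepth_wtrace_le htrv
        rw [rp_length] at h1
        omega
      by_contra hnot
      refine hvclean i y hi ⟨v₂, htr₂, hy⟩ ⟨s, ?_, hnot⟩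
      have heq : m - i = j := by omega
      rw [heq]
      exact ent_wtrace hent
  -- produce the witness
  rcases wtrace_cases htru with ⟨-, rfl⟩ | hentu
  · -- u₁ = u itself : use the root τ-step of `subst σ u`
    obtain ⟨B₀, hstepB⟩ := (hρ σ hσ).1.2.2 hAτ
    refine ⟨B₀, B₀, hstepB, WTraceTo.refl _, ?_, ?_⟩
    · exact hGB.2.1 B₀ B₀ hstepB (WTraceTo.refl _)
    · intro s htrs
      exact hmain2 u₁ htru huclean s (WTraceTo.tau hstepB htrs)
  · -- u₁ is a proper τ-derivative
    obtain ⟨u₀, hstep₀, htr₀⟩ : ∃ u₀, Step u none u₀ ∧ WTraceTo u₀ [] u₁ := by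
      rcases hentu with ⟨u₀, h1, h2⟩ | ⟨b, w', z, hbw, -, -⟩
      · exact ⟨u₀, h1, h2⟩
      · exact nomatch hbw
    refine ⟨subst σ u₀, subst σ u₁, step_subst_lift hstep₀, wtrace_subst_lift htr₀, ?_, ?_⟩
    · exact hGB.2.1 _ _ (step_subst_lift hstep₀) (wtrace_subst_lift htr₀)
    · exact hmain2 u₁ htru huclean
/-- The core lemma: a root-position axiom instance preserves `Phip` between `Good` terms. -/
theorem core {R : Tm A V → Tm A V → Prop} {t u : Tm A V} {σ : V → Tm A V}
    (hm : 1 ≤ m) (hdt : wdepth t < m) (hdu : wdepth u < m) (hAx : R t u ∨ R u t)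
    (hS : ∀ p q : Tm A V, Closed p → Closed q → Deriv R p q → WIFeq p q)
    (hclA : Closed (subst σ t)) (hclB : Closed (subst σ u))
    (hGA : Good a m (subst σ t)) (hGB : Good a m (subst σ u))
    (hPhipA : Phip a m (subst σ t)) : Phip a m (subst σ u) := by
  classical
  set σ' : V → Tm A V := fun y => if y ∈ vars t ∪ vars u then σ y else nil with hσ'
  have hta : subst σ' t = subst σ t := by
    refine subst_congr ?_
    intro x hx
    simp only [hσ']
    exact if_pos (Or.inl hx)
  have htb : subst σ' u = subst σ u := by
    refine subst_congr ?_
    intro x hx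
    simp only [hσ']
    exact if_pos (Or.inr hx)
  have hσ'cl : ∀ y, Closed (σ' y) := by
    intro y
    simp only [hσ']
    split
    · rename_i h
      rcases h with h | h
      · exact closed_of_subst_closed hclA y h
      · exact closed_of_subst_closed hclB y h
    · exact closed_nil
  have hρ : ∀ ρ : V → Tm A V, (∀ y, Closed (ρ y)) → WIFeq (subst ρ t) (subst ρ u) := by
    intro ρ hρcl
    have hcl1 : Closed (subst ρ t) := closed_subst_of fun x _ => hρcl x
    have hcl2 : Closed (subst ρ u) := closed_subst_of fun x _ => hρcl x
    refine hS _ _ hcl1 hcl2 ?_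
    rcases hAx with h | h
    · exact Deriv.inst ρ h
    · exact Deriv.symm (Deriv.inst ρ h)
  rw [← hta] at hPhipA hGA
  rw [← htb] at hGB ⊢
  obtain ⟨x₀, r', hstep, htr, hPsi⟩ := hPhipA
  have htot : WTraceTo (subst σ' t) [] r' := WTraceTo.tau hstep htr
  rcases wtrace_subst_decompose htot with ⟨t₁, htr₁, rfl⟩ |
    ⟨w₁, w₂, t₂, x, hw, htr₂, hx, hent⟩
  · exact core_caseA hm hdt hdu hσ'cl hρ hGA hGB ⟨x₀, hstep⟩ htr₁ hPsi
  · obtain ⟨rfl, rfl⟩ := List.append_eq_nil_iff.1 hw.symm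
    rcases hent with ⟨s₀, hstep₀, htr₀⟩ | ⟨b, w', z, hbw, -, -⟩
    · exact core_caseB hm hdu hρ htr₂ hx hstep₀ htr₀ hPsi
    · exact nomatch hbw

/-- The one-step preservation lemma for `Phip`, by induction on the context. -/
theorem mainCtx {R : Tm A V → Tm A V → Prop} {t u : Tm A V} {σ : V → Tm A V}
    (hm : 1 ≤ m) (hdt : wdepth t < m) (hdu : wdepth u < m) (hAx : R t u ∨ R u t)
    (hS : ∀ p q : Tm A V, Closed p → Closed q → Deriv R p q → WIFeq p q)
    (C : Ctx A V) :
    Closed (C.fill (subst σ t)) → Closed (C.fill (subst σ u)) →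
    Good a m (C.fill (subst σ t)) → Good a m (C.fill (subst σ u)) →
    Phip a m (C.fill (subst σ t)) → Phip a m (C.fill (subst σ u)) := by
  have hbase : Deriv R (subst σ t) (subst σ u) := by
    rcases hAx with h | h
    · exact Deriv.inst σ h
    · exact Deriv.symm (Deriv.inst σ h)
  induction C with
  | hole => exact fun hc1 hc2 hg1 hg2 h => core hm hdt hdu hAx hS hc1 hc2 hg1 hg2 h
  | plusL C v ih =>
      intro hc1 hc2 hg1 hg2 hphip
      simp only [Ctx.fill] at hc1 hc2 hg1 hg2 hphip ⊢
      obtain ⟨x₀, x', hstep, htr, hpsi⟩ := hphip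
      cases hstep with
      | plusL _ h =>
          have := ih (closed_plus_iff.1 hc1).1 (closed_plus_iff.1 hc2).1
            (good_plusL hg1) (good_plusL hg2) ⟨x₀, x', h, htr, hpsi⟩
          obtain ⟨y₀, y', hs, ht, hp⟩ := this
          exact ⟨y₀, y', Step.plusL _ hs, ht, hp⟩
      | plusR _ h => exact ⟨x₀, x', Step.plusR _ h, htr, hpsi⟩
  | plusR v C ih =>
      intro hc1 hc2 hg1 hg2 hphip
      simp only [Ctx.fill] at hc1 hc2 hg1 hg2 hphip ⊢
      obtain ⟨x₀, x', hstep, htr, hpsi⟩ := hphip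
      cases hstep with
      | plusR _ h =>
          have := ih (closed_plus_iff.1 hc1).2 (closed_plus_iff.1 hc2).2
            (good_plusR hg1) (good_plusR hg2) ⟨x₀, x', h, htr, hpsi⟩
          obtain ⟨y₀, y', hs, ht, hp⟩ := this
          exact ⟨y₀, y', Step.plusR _ hs, ht, hp⟩
      | plusL _ h => exact ⟨x₀, x', Step.plusL _ h, htr, hpsi⟩
  | pre α C ih =>
      intro hc1 hc2 hg1 hg2 hphip
      simp only [Ctx.fill] at hc1 hc2 hg1 hg2 hphip ⊢
      obtain ⟨x₀, x', hstep, htr, hpsi⟩ := hphip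
      cases hstep with
      | pre =>
          rcases wtrace_cases htr with ⟨-, rfl⟩ | hent
          · have heq : WIFeq (C.fill (subst σ t)) (C.fill (subst σ u)) :=
              hS _ _ (closed_pre_iff.1 hc1) (closed_pre_iff.1 hc2) (deriv_fill C hbase)
            exact ⟨C.fill (subst σ u), C.fill (subst σ u), Step.pre none _,
              WTraceTo.refl _, psi_transfer heq hpsi⟩
          · rcases hent with ⟨s₀, hstep₀, htr₀⟩ | ⟨b, w', z, hbw, -, -⟩
            · have := ih (closed_pre_iff.1 hc1) (closed_pre_iff.1 hc2)
                (good_pre_none hg1) (good_pre_none hg2) ⟨s₀, x', hstep₀, htr₀, hpsi⟩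
              obtain ⟨y₀, y', hs, ht, hp⟩ := this
              exact ⟨C.fill (subst σ u), y', Step.pre none _, WTraceTo.tau hs ht, hp⟩
            · exact nomatch hbw
end Dev2
end Tm

/-- there is no finite axiomatization that is both sound and
ground-complete for BCCS(A) modulo weak impossible futures equivalence. -/
theorem stmt12 {A V : Type} [Nonempty A] [Countable V] [Infinite V] :
    ¬ ∃ E : Set (Tm A V × Tm A V), E.Finite ∧
      (∀ p q : Tm A V, Tm.Closed p → Tm.Closed q →
        Tm.Deriv (fun t u => (t, u) ∈ E) p q → Tm.WIFeq p q) ∧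
      (∀ p q : Tm A V, Tm.Closed p → Tm.Closed q →
        Tm.WIFeq p q → Tm.Deriv (fun t u => (t, u) ∈ E) p q) := by
  rintro ⟨E, hfin, hsound, hcompl⟩
  classical
  set R : Tm A V → Tm A V → Prop := fun t u => (t, u) ∈ E with hR
  obtain ⟨n, hn⟩ :=
    (hfin.image (fun p : Tm A V × Tm A V => max p.1.wdepth p.2.wdepth)).bddAbove
  set m := n + 1 with hm'
  have hm : 1 ≤ m := by omega
  have hdep : ∀ t u : Tm A V, R t u → t.wdepth < m ∧ u.wdepth < m := by
    intro t u h
    have hmem := hn (Set.mem_image_of_mem (fun p : Tm A V × Tm A V =>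
      max p.1.wdepth p.2.wdepth) h)
    have h1 := le_trans (le_max_left t.wdepth u.wdepth) hmem
    have h2 := le_trans (le_max_right t.wdepth u.wdepth) hmem
    omega
  obtain ⟨a⟩ := ‹Nonempty A›
  have hder : Tm.Deriv R (Tm.pw a m) (Tm.qw a m) :=
    hcompl _ _ Tm.closed_pw Tm.closed_qw Tm.wifeq_pw_qw
  have hchain := Tm.deriv_rtg hder
  set σ₀ : V → Tm A V := fun _ => Tm.nil with hσ₀
  have hcl0 : ∀ v : Tm A V, Tm.Closed (Tm.subst σ₀ v) := fun v =>
    Tm.closed_subst_of (fun x _ => Tm.closed_nil)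
  set Rc : Tm A V → Tm A V → Prop :=
    fun r r' => Tm.OneStep R r r' ∧ Tm.Closed r ∧ Tm.Closed r' with hRc
  have hchainC : Relation.ReflTransGen Rc
      (Tm.subst σ₀ (Tm.pw a m)) (Tm.subst σ₀ (Tm.qw a m)) :=
    Relation.ReflTransGen.lift (Tm.subst σ₀)
      (fun x y h => ⟨Tm.onestep_subst σ₀ h, hcl0 x, hcl0 y⟩) _ _ hchain
  rw [Tm.subst_closed_eq Tm.closed_pw, Tm.subst_closed_eq Tm.closed_qw] at hchainC
  have hwalk : ∀ z : Tm A V, Relation.ReflTransGen Rc (Tm.pw a m) z →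
      Tm.Deriv R (Tm.pw a m) z ∧ Tm.Closed z ∧ Tm.Phi a m z := by
    intro z hch
    induction hch with
    | refl => exact ⟨Tm.Deriv.refl _, Tm.closed_pw, Tm.phip_phi (Tm.phip_pw hm)⟩
    | @tail y z' h1 hstep ih =>
        obtain ⟨hd, hcy, hphi⟩ := ih
        obtain ⟨hos, hcy', hcz⟩ := hstep
        have hdz : Tm.Deriv R (Tm.pw a m) z' := Tm.Deriv.trans hd (Tm.onestep_deriv hos)
        refine ⟨hdz, hcz, ?_⟩
        have hWy : Tm.WIFeq y (Tm.pw a m) := Tm.wifeq_symm (hsound _ _ Tm.closed_pw hcy hd)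
        have hWz : Tm.WIFeq z' (Tm.pw a m) := Tm.wifeq_symm (hsound _ _ Tm.closed_pw hcz hdz)
        have hGy := Tm.good_of_wifeq_pw hm hWy
        have hGz := Tm.good_of_wifeq_pw hm hWz
        obtain ⟨C, t', u', σ, hAx, rfl, rfl⟩ := hos
        have hdepth : t'.wdepth < m ∧ u'.wdepth < m := by
          rcases hAx with h | h
          · exact hdep _ _ h
          · exact (hdep _ _ h).symm
        obtain ⟨x', htr, hpsi⟩ := hphi
        rcases Tm.wtrace_cases htr with ⟨-, rfl⟩ | hent
        · have heq : Tm.WIFeq (C.fill (Tm.subst σ t')) (C.fill (Tm.subst σ u')) :=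
            Tm.wifeq_trans hWy (Tm.wifeq_symm hWz)
          exact ⟨_, Tm.WTraceTo.refl _, Tm.psi_transfer heq hpsi⟩
        · rcases hent with ⟨s₀, hs, ht⟩ | ⟨b, w', zz, hbw, -, -⟩
          · have := Tm.mainCtx hm hdepth.1 hdepth.2 hAx hsound C hcy' hcz hGy hGz
              ⟨s₀, x', hs, ht, hpsi⟩
            exact Tm.phip_phi this
          · exact nomatch hbw
  exact Tm.not_phi_qw hm (hwalk _ hchainC).2.2
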